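/- Let a ∈ (0, 2/3], p ∈ (0,1), f ∈ U_+, and x ∈ [0, 1/(1−a)]. Set Y_n = f(X_n^x)·1{τ_x > n}. Then almost surely τ_x = inf{n ≥ 1 : Y_n = 0}, and (Y_n)_{n≥0} is a time-homogeneous Markov chain: for every bounded measurable g : ℝ → ℝ there exists a measurable h : ℝ → ℝ such that for every n ≥ 0, E[g(Y_{n+1}) | σ(ξ_1, …, ξ_n)] = h(Y_n) almost surely. -/

import Mathlib

open MeasureTheory Filter Set ProbabilityTheory
open scoped ENNReal Classical Topology

noncomputable section

/-- The map `T_a` (extended to a total function; on the paper's domain it agrees with `T_a`,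
and `T_{2/3}(1) = 0`). -/
def Tmap (a x : ℝ) : ℝ := if x < 1 then (x + 1) / a else (x - 1) / a

/-- `κ_a(x) ∈ ℕ∞`: the first entry time of the orbit of `x` under `T_a` into the hole
`I_a = ((2a-1)/(1-a), 1)`. -/
def kappa (a x : ℝ) : ℕ∞ :=
  ⨅ (k : ℕ) (_ : (Tmap a)^[k] x ∈ Set.Ioo ((2 * a - 1) / (1 - a)) 1), (k : ℕ∞)

/-- `δ_k(x)` -/
def deltaF (a x : ℝ) (k : ℕ) : ℝ := if (Tmap a)^[k] x < 1 then 1 else 0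

/-- `L_k(x)` -/
def Lnat (a x : ℝ) (k : ℕ) : ℕ :=
  ((Finset.range k).filter fun i => (Tmap a)^[i] x < 1).card

/-- the `k`-th term of the series `∑_{k=0}^{κ_a(x)} δ_k(x) (p/λ)^{k+1} (q/p)^{L_k(x)}` -/
def lamTerm (a p x lam : ℝ) (k : ℕ) : ℝ :=
  if (k : ℕ∞) ≤ kappa a x then
    deltaF a x k * (p / lam) ^ (k + 1) * ((1 - p) / p) ^ (Lnat a x k)
  else 0

/-- `λ` is a positive solution of the equation defining `λ_a`. -/
def IsLamSol (a p lam : ℝ) : Prop := 0 < lam ∧ HasSum (lamTerm a p 0 lam) 1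

/-- `V(x) = ∑_{k=0}^{κ_a} (p/λ_a)^k (q/p)^{L_k} 1{T_a^k(0) ≤ x}` -/
def Vfun (a p lam x : ℝ) : ℝ :=
  ∑' k : ℕ, if (k : ℕ∞) ≤ kappa a 0 ∧ (Tmap a)^[k] 0 ≤ x then
    (p / lam) ^ k * ((1 - p) / p) ^ (Lnat a 0 k) else 0

/-- `F̄_a(y) = ∑_{k=0}^{κ_a(y)} δ_k(y) (p/λ_a)^{k+1} (q/p)^{L_k(y)}`. -/
def Fbar (a p lam y : ℝ) : ℝ := ∑' k, lamTerm a p y lam k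

/-- Membership in the class `U_+` of positive saltus functions supported on the orbit of `0`. -/
def UplusMem (a : ℝ) (f : ℝ → ℝ) : Prop :=
  ∃ u : ℕ → ℝ, (∀ k : ℕ, (k : ℕ∞) ≤ kappa a 0 → 0 < u k) ∧
    Summable (fun k : ℕ => if (k : ℕ∞) ≤ kappa a 0 then u k else 0) ∧
    ∀ x : ℝ, f x = ∑' k : ℕ, if (k : ℕ∞) ≤ kappa a 0 ∧ (Tmap a)^[k] 0 ≤ x then u k else 0

namespace MyAux

set_option linter.unusedVariables false
set_option linter.unusedSectionVars false
set_option linter.unusedTactic false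
set_option maxHeartbeats 1000000

/-- the orbit of 0 -/
def orb (a : ℝ) (k : ℕ) : ℝ := (Tmap a)^[k] 0

/-- `k ≤ κ_a` -/
def cnd (a : ℝ) (k : ℕ) : Prop := (k : ℕ∞) ≤ kappa a 0

lemma cnd_iff {a : ℝ} {k : ℕ} :
    cnd a k ↔ ∀ j : ℕ, orb a j ∈ Set.Ioo ((2 * a - 1) / (1 - a)) 1 → k ≤ j := by
  unfold cnd kappa
  rw [le_iInf_iff]
  refine forall_congr' fun j => ?_
  rw [le_iInf_iff]
  constructor
  · intro h hj
    exact_mod_cast h hj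
  · intro h hj
    exact_mod_cast h hj

lemma cnd_zero (a : ℝ) : cnd a 0 := by
  simp [cnd]

lemma cnd_of_le {a : ℝ} {j k : ℕ} (hjk : j ≤ k) (h : cnd a k) : cnd a j := by
  rw [cnd_iff] at h ⊢
  exact fun i hi => hjk.trans (h i hi) |>.trans le_rfl |> fun _ => (hjk.trans (h i hi))

lemma cnd_succ {a : ℝ} {k : ℕ} (h : cnd a k)
    (hk : orb a k ∉ Set.Ioo ((2 * a - 1) / (1 - a)) 1) : cnd a (k + 1) := by
  rw [cnd_iff] at h ⊢
  intro j hj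
  rcases Nat.lt_or_ge j (k+1) with hlt | hge
  · exact absurd hj (by
      have hjk : j ≤ k := Nat.lt_succ_iff.mp hlt
      have := h j hj
      have : j = k := le_antisymm hjk this
      rw [this] at hj; exact absurd hj hk)
  · exact hge

lemma not_cnd_one {a : ℝ} (ha1 : 0 < a) (ha : a < 1) (h : ¬ cnd a 1) : a < 1/2 := by
  rw [cnd_iff] at h
  push_neg at h
  obtain ⟨j, hj, hj1⟩ := h
  have : j = 0 := Nat.lt_one_iff.mp hj1
  subst this
  have h0 : orb a 0 = 0 := rfl
  rw [h0] at hj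
  have := hj.1
  have h1a : 0 < 1 - a := by linarith
  have : 2 * a - 1 < 0 := by
    by_contra hc
    push_neg at hc
    have : 0 ≤ (2*a-1)/(1-a) := div_nonneg hc h1a.le
    linarith
  linarith

lemma orb_succ {a : ℝ} (k : ℕ) : orb a (k+1) = Tmap a (orb a k) := by
  unfold orb
  rw [Function.iterate_succ_apply']

lemma orb_nonneg {a : ℝ} (ha1 : 0 < a) : ∀ k, cnd a k → 0 ≤ orb a k := by
  intro k
  induction k with
  | zero => intro _; simp [orb]
  | succ n ih =>
    intro h
    have hn := cnd_of_le (Nat.le_succ n) h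
    have h0 := ih hn
    rw [orb_succ]
    unfold Tmap
    split_ifs with hlt
    · positivity
    · push_neg at hlt
      have : (0:ℝ) ≤ orb a n - 1 := by linarith
      positivity

lemma orb_one {a : ℝ} : orb a 1 = 1/a := by
  have : orb a 1 = Tmap a 0 := orb_succ 0
  rw [this]
  unfold Tmap
  norm_num

/-- for a = 2/3 the orbit never hits 1 -/
lemma orb_ne_one (h23 : ∀ᵉ (_x ∈ (∅:Set ℕ)), True) : True := trivial

lemma orb_int {k : ℕ} (hk : 1 ≤ k) : ∃ m : ℤ, orb (2/3) k * 2^k = 3 * m := by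
  induction k with
  | zero => omega
  | succ n ih =>
    rcases Nat.eq_or_lt_of_le hk with h1 | h2
    · refine ⟨1, ?_⟩
      have : n = 0 := by omega
      subst this
      rw [orb_one]
      norm_num
    · have hn : 1 ≤ n := by omega
      obtain ⟨m, hm⟩ := ih hn
      rw [orb_succ]
      unfold Tmap
      split_ifs with hlt
      · refine ⟨3*m + 2^n, ?_⟩
        have : orb (2/3) n = 3 * (m:ℝ) / 2^n := by
          field_simp at hm ⊢
          linarith
        rw [this]
        push_cast
        field_simp
        ring
      · refine ⟨3*m - 2^n, ?_⟩
        have : orb (2/3) n = 3 * (m:ℝ) / 2^n := by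
          field_simp at hm ⊢
          linarith
        rw [this]
        push_cast
        field_simp
        ring

lemma orb_ne_one' : ∀ k, orb (2/3) k ≠ 1 := by
  intro k
  cases k with
  | zero => norm_num [orb]
  | succ n =>
    intro hc
    obtain ⟨m, hm⟩ := orb_int (k := n+1) (by omega)
    rw [hc, one_mul] at hm
    have h3 : (3:ℤ) ∣ 2^(n+1) := by
      refine ⟨m, ?_⟩
      exact_mod_cast hm
    have h2 : ¬ ((3:ℤ) ∣ 2^(n+1)) := by
      intro h
      have := Int.Prime.dvd_pow' (p := 3) (n := 2) (by norm_num) h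
      norm_num at this
    exact h2 h3


/-- the term of the saltus series -/
def fterm (a : ℝ) (u : ℕ → ℝ) (z : ℝ) (k : ℕ) : ℝ :=
  if cnd a k ∧ orb a k ≤ z then u k else 0

/-- the canonical representative of `f` -/
def fsum (a : ℝ) (u : ℕ → ℝ) (z : ℝ) : ℝ := ∑' k, fterm a u z k

def ubnd (a : ℝ) (u : ℕ → ℝ) (k : ℕ) : ℝ := if cnd a k then u k else 0

section f
variable {a : ℝ} {u : ℕ → ℝ} (hupos : ∀ k, cnd a k → 0 < u k)
  (husum : Summable (ubnd a u))

include hupos in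
lemma fterm_nonneg (z : ℝ) (k : ℕ) : 0 ≤ fterm a u z k := by
  unfold fterm
  split_ifs with h
  · exact (hupos k h.1).le
  · exact le_rfl

include hupos in
lemma fterm_le_ubnd (z : ℝ) (k : ℕ) : fterm a u z k ≤ ubnd a u k := by
  unfold fterm ubnd
  split_ifs with h h2 h3
  · exact le_rfl
  · exact absurd h.1 h2
  · exact (hupos k h3).le
  · exact le_rfl

include hupos husum in
lemma summable_fterm (z : ℝ) : Summable (fterm a u z) :=
  husum.of_nonneg_of_le (fterm_nonneg hupos z) (fterm_le_ubnd hupos z)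

include hupos in
lemma fterm_mono {z z' : ℝ} (h : z ≤ z') (k : ℕ) : fterm a u z k ≤ fterm a u z' k := by
  unfold fterm
  split_ifs with h1 h2 h3
  · exact le_rfl
  · exact absurd ⟨h1.1, h1.2.trans h⟩ h2
  · exact (hupos k h3.1).le
  · exact le_rfl

include hupos husum in
lemma fsum_mono {z z' : ℝ} (h : z ≤ z') : fsum a u z ≤ fsum a u z' :=
  Summable.tsum_le_tsum (fterm_mono hupos h) (summable_fterm hupos husum z) (summable_fterm hupos husum z')

include hupos in
lemma fsum_neg {z : ℝ} (ha1 : 0 < a) (hz : z < 0) : fsum a u z = 0 := by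
  unfold fsum
  convert tsum_zero with k
  unfold fterm
  rw [if_neg]
  rintro ⟨hc, hle⟩
  exact absurd (le_trans (orb_nonneg ha1 k hc) hle) (not_le.mpr hz)

include hupos husum in
lemma fsum_pos {z : ℝ} (hz : 0 ≤ z) : 0 < fsum a u z := by
  have h0 : fterm a u z 0 = u 0 := by
    unfold fterm
    rw [if_pos ⟨cnd_zero a, by simpa [orb] using hz⟩]
  calc (0:ℝ) < u 0 := hupos 0 (cnd_zero a)
  _ = fterm a u z 0 := h0.symm
  _ ≤ fsum a u z := Summable.le_tsum (summable_fterm hupos husum z) 0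
      (fun j _ => fterm_nonneg hupos z j)

include hupos husum in
lemma fsum_nonneg (z : ℝ) : 0 ≤ fsum a u z :=
  tsum_nonneg (fterm_nonneg hupos z)

include hupos husum in
/-- if sums agree then the membership sets agree -/
lemma sets_eq_of_fsum_eq {z z' : ℝ} (hzz : z ≤ z') (hs : fsum a u z = fsum a u z')
    {k : ℕ} (hc : cnd a k) : orb a k ≤ z ↔ orb a k ≤ z' := by
  constructor
  · exact fun h => h.trans hzz
  · intro h
    by_contra hnot
    have key : fsum a u z + u k ≤ fsum a u z' := by
      have h1 : Summable (fun j => if j = k then u k else 0) := by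
        simpa using (hasSum_ite_eq k (u k)).summable
      have h2 : fsum a u z + u k = ∑' j, (fterm a u z j + if j = k then u k else 0) := by
        rw [Summable.tsum_add (summable_fterm hupos husum z) h1, tsum_ite_eq]
        rfl
      rw [h2]
      refine Summable.tsum_le_tsum ?_ ((summable_fterm hupos husum z).add h1)
        (summable_fterm hupos husum z')
      · intro j
        by_cases hjk : j = k
        · subst hjk
          have hz0 : fterm a u z j = 0 := by
            unfold fterm; rw [if_neg (by tauto)]
          have hz1 : fterm a u z' j = u j := by
            unfold fterm; rw [if_pos ⟨hc, h⟩]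
          simp [hz0, hz1]
        · simp only [if_neg hjk, add_zero]
          exact fterm_mono hupos hzz j
    rw [hs] at key
    have := hupos k hc
    linarith


end f

section f2
variable {a : ℝ} {u : ℕ → ℝ} (hupos : ∀ k, cnd a k → 0 < u k)
  (husum : Summable (ubnd a u))

/-- the generalized inverse of f -/
def Gfun (a : ℝ) (u : ℕ → ℝ) (y : ℝ) : ℝ :=
  sInf ({z : ℝ | 0 ≤ z ∧ y ≤ fsum a u z} ∪ {1/(1-a) + 1})

lemma Gset_bddBelow {a : ℝ} {u : ℕ → ℝ} (ha : a < 1) (y : ℝ) :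
    BddBelow ({z : ℝ | 0 ≤ z ∧ y ≤ fsum a u z} ∪ {1/(1-a) + 1}) := by
  refine ⟨0, fun z hz => ?_⟩
  rcases hz with hz | hz
  · exact hz.1
  · rw [Set.mem_singleton_iff] at hz
    subst hz
    have : (0:ℝ) < 1 - a := by linarith
    positivity

lemma Gfun_mono {a : ℝ} {u : ℕ → ℝ} (ha : a < 1) : Monotone (Gfun a u) := by
  intro y y' hyy
  refine csInf_le_csInf (Gset_bddBelow ha y) ⟨1/(1-a)+1, Or.inr rfl⟩ ?_
  rintro z (hz | hz)
  · exact Or.inl ⟨hz.1, hyy.trans hz.2⟩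
  · exact Or.inr hz

include hupos husum in
lemma Gfun_le (ha : a < 1) {z₀ : ℝ} (hz0 : 0 ≤ z₀) : Gfun a u (fsum a u z₀) ≤ z₀ :=
  csInf_le (Gset_bddBelow ha _) (Or.inl ⟨hz0, le_rfl⟩)

lemma Gfun_nonneg {a : ℝ} {u : ℕ → ℝ} (ha : a < 1) (y : ℝ) : 0 ≤ Gfun a u y := by
  refine le_csInf ⟨1/(1-a)+1, Or.inr rfl⟩ ?_
  rintro z (hz | hz)
  · exact hz.1
  · rw [Set.mem_singleton_iff] at hz
    subst hz
    have : (0:ℝ) < 1 - a := by linarith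
    positivity

include hupos husum in
lemma le_fsum_of_Gfun_lt (ha : a < 1) {y w : ℝ} (hGw : Gfun a u y < w)
    (hwc : w ≤ 1/(1-a) + 1) : y ≤ fsum a u w := by
  obtain ⟨b, hb, hbw⟩ := exists_lt_of_csInf_lt (s := {z : ℝ | 0 ≤ z ∧ y ≤ fsum a u z} ∪ {1/(1-a)+1})
    ⟨1/(1-a)+1, Or.inr rfl⟩ hGw
  rcases hb with hb | hb
  · exact hb.2.trans (fsum_mono hupos husum hbw.le)
  · rw [Set.mem_singleton_iff] at hb
    subst hb
    exact absurd (hbw.trans_le hwc) (lt_irrefl _)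

include hupos husum in
lemma fsum_Gfun (ha1 : 0 < a) (ha : a < 1) {z₀ : ℝ} (hz0 : 0 ≤ z₀) (hz1 : z₀ ≤ 1/(1-a)) :
    fsum a u (Gfun a u (fsum a u z₀)) = fsum a u z₀ := by
  set y := fsum a u z₀ with hy
  set G := Gfun a u y with hG
  have hGz : G ≤ z₀ := Gfun_le hupos husum ha hz0
  refine le_antisymm (fsum_mono hupos husum hGz) ?_
  -- show y ≤ fsum a u G
  refine le_of_forall_pos_le_add ?_
  intro ε hε
  -- choose N with small tail
  have htail : Tendsto (fun N => ∑' i, ubnd a u (i + N)) atTop (𝓝 0) := by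
    have h1 : Tendsto (fun N => ∑ i ∈ Finset.range N, ubnd a u i) atTop (𝓝 (∑' i, ubnd a u i)) :=
      husum.hasSum.tendsto_sum_nat
    have h2 : ∀ N, ∑' i, ubnd a u (i + N) =
        (∑' i, ubnd a u i) - ∑ i ∈ Finset.range N, ubnd a u i := by
      intro N
      have := Summable.sum_add_tsum_nat_add (f := ubnd a u) N husum
      linarith
    simp_rw [h2]
    have := Tendsto.const_sub (∑' i, ubnd a u i) h1
    simpa using this
  obtain ⟨N, hN⟩ : ∃ N, ∑' i, ubnd a u (i + N) < ε := (htail.eventually (gt_mem_nhds hε)).exists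
  -- choose a good w
  have hmex : ∀ k, ∃ m : ℕ, G < orb a k → G + 1/(m+1) < orb a k := by
    intro k
    by_cases hk : G < orb a k
    · obtain ⟨n, hn⟩ := exists_nat_one_div_lt (sub_pos.mpr hk)
      exact ⟨n, fun _ => by push_cast at hn ⊢; linarith⟩
    · exact ⟨0, fun h => absurd h hk⟩
  choose mf hmf using hmex
  set M := (Finset.range N).sup mf with hM
  set w := G + 1/(M+1 : ℝ) with hw
  have hMpos : (0:ℝ) < 1/(M+1 : ℝ) := by positivity
  have hGw : G < w := by rw [hw]; linarith
  have hwc : w ≤ 1/(1-a) + 1 := by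
    have h1 : (1:ℝ)/(M+1:ℝ) ≤ 1 := by
      rw [div_le_one (by positivity)]
      push_cast; linarith [Nat.cast_nonneg (α := ℝ) M]
    have := hGz.trans hz1
    rw [hw]; linarith
  have hyw : y ≤ fsum a u w := le_fsum_of_Gfun_lt hupos husum ha hGw hwc
  -- termwise comparison for k < N
  have hterm : ∀ k < N, fterm a u w k = fterm a u G k := by
    intro k hk
    have : orb a k ≤ w ↔ orb a k ≤ G := by
      constructor
      · intro h
        by_contra hno
        push_neg at hno
        have h1 := hmf k hno
        have h2 : (1:ℝ)/(M+1:ℝ) ≤ 1/(mf k + 1 : ℝ) := by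
          apply one_div_le_one_div_of_le (by positivity)
          have : mf k ≤ M := Finset.le_sup (Finset.mem_range.mpr hk)
          push_cast
          exact_mod_cast Nat.add_le_add_right this 1
        rw [hw] at h
        linarith
      · intro h; exact h.trans hGw.le
    unfold fterm
    by_cases hc : cnd a k ∧ orb a k ≤ w
    · rw [if_pos hc, if_pos ⟨hc.1, this.mp hc.2⟩]
    · rw [if_neg hc, if_neg (fun hc2 => hc ⟨hc2.1, this.mpr hc2.2⟩)]
  -- split the sum
  have hsplit := Summable.sum_add_tsum_nat_add (f := fterm a u w) N (summable_fterm hupos husum w)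
  have hle1 : ∑ i ∈ Finset.range N, fterm a u w i ≤ fsum a u G := by
    have he : ∑ i ∈ Finset.range N, fterm a u w i = ∑ i ∈ Finset.range N, fterm a u G i :=
      Finset.sum_congr rfl (fun i hi => hterm i (Finset.mem_range.mp hi))
    rw [he]
    exact Summable.sum_le_tsum (Finset.range N) (fun i _ => fterm_nonneg hupos G i)
      (summable_fterm hupos husum G)
  have hle2 : ∑' i, fterm a u w (i + N) ≤ ∑' i, ubnd a u (i + N) := by
    refine Summable.tsum_le_tsum (fun i => fterm_le_ubnd hupos w (i+N)) ?_ ?_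
    · exact (summable_nat_add_iff N).mpr (summable_fterm hupos husum w)
    · exact (summable_nat_add_iff N).mpr husum
  have hw2 : fsum a u w = ∑ i ∈ Finset.range N, fterm a u w i + ∑' i, fterm a u w (i + N) := by
    rw [hsplit]; rfl
  linarith


end f2

section key
variable {a : ℝ} {u : ℕ → ℝ} (ha1 : 0 < a) (ha2 : a ≤ 2/3)

include ha1 in
lemma key_plus {z z' : ℝ} (hz : 0 ≤ z) (hz' : 0 ≤ z')
    (hS : ∀ k, cnd a k → (orb a k ≤ z ↔ orb a k ≤ z')) :
    fsum a u (a * z + 1) = fsum a u (a * z' + 1) := by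
  unfold fsum
  refine tsum_congr fun k => ?_
  unfold fterm
  by_cases hc : cnd a k
  · have hiff : orb a k ≤ a * z + 1 ↔ orb a k ≤ a * z' + 1 := by
      by_cases hlt : orb a k < 1
      · constructor <;> intro _ <;> nlinarith
      · push_neg at hlt
        have hnotmem : orb a k ∉ Set.Ioo ((2 * a - 1) / (1 - a)) 1 := by
          rintro ⟨_, h2⟩; linarith
        have hc1 : cnd a (k+1) := cnd_succ hc hnotmem
        have horb : orb a (k+1) = (orb a k - 1) / a := by
          rw [orb_succ]; unfold Tmap; rw [if_neg (not_lt.mpr hlt)]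
        have h1 : orb a k ≤ a * z + 1 ↔ orb a (k+1) ≤ z := by
          rw [horb, div_le_iff₀ ha1]
          constructor <;> intro <;> nlinarith
        have h2 : orb a k ≤ a * z' + 1 ↔ orb a (k+1) ≤ z' := by
          rw [horb, div_le_iff₀ ha1]
          constructor <;> intro <;> nlinarith
        rw [h1, h2]
        exact hS (k+1) hc1
    rw [if_congr (and_congr_right fun _ => hiff) rfl rfl]
  · rw [if_neg (fun h => hc h.1), if_neg (fun h => hc h.1)]

include ha1 ha2 in
lemma key_minus {z z' : ℝ} (hz : 0 ≤ z) (hzc : z ≤ 1/(1-a)) (hz' : 0 ≤ z')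
    (hzc' : z' ≤ 1/(1-a))
    (hS : ∀ k, cnd a k → (orb a k ≤ z ↔ orb a k ≤ z')) :
    (if a * z - 1 < 0 then (0:ℝ) else fsum a u (a * z - 1))
      = (if a * z' - 1 < 0 then (0:ℝ) else fsum a u (a * z' - 1)) := by
  have h1a : 0 < 1 - a := by linarith
  have hiff0 : a * z - 1 < 0 ↔ a * z' - 1 < 0 := by
    by_cases hc1 : cnd a 1
    · have h1 := hS 1 hc1
      rw [orb_one] at h1
      have e1 : 1/a ≤ z ↔ 0 ≤ a * z - 1 := by
        rw [div_le_iff₀ ha1]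
        constructor <;> intro <;> nlinarith
      have e2 : 1/a ≤ z' ↔ 0 ≤ a * z' - 1 := by
        rw [div_le_iff₀ ha1]
        constructor <;> intro <;> nlinarith
      rw [e1, e2] at h1
      constructor <;> intro h <;> by_contra hc <;> push_neg at hc
      · exact absurd (h1.mpr hc) (not_le.mpr h)
      · exact absurd (h1.mp hc) (not_le.mpr h)
    · have ha12 : a < 1/2 := not_cnd_one ha1 (by linarith) hc1
      have hz2 : a * z < 1 := by
        have : a * z ≤ a * (1/(1-a)) := mul_le_mul_of_nonneg_left hzc ha1.le
        have h2 : a * (1/(1-a)) = a/(1-a) := by ring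
        have h3 : a/(1-a) < 1 := by
          rw [div_lt_one h1a]; linarith
        linarith
      have hz2' : a * z' < 1 := by
        have : a * z' ≤ a * (1/(1-a)) := mul_le_mul_of_nonneg_left hzc' ha1.le
        have h2 : a * (1/(1-a)) = a/(1-a) := by ring
        have h3 : a/(1-a) < 1 := by
          rw [div_lt_one h1a]; linarith
        linarith
      constructor <;> intro _ <;> linarith
  by_cases hneg : a * z - 1 < 0
  · rw [if_pos hneg, if_pos (hiff0.mp hneg)]
  · rw [if_neg hneg, if_neg (fun h => hneg (hiff0.mpr h))]
    unfold fsum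
    refine tsum_congr fun k => ?_
    unfold fterm
    by_cases hc : cnd a k
    · have hiff : orb a k ≤ a * z - 1 ↔ orb a k ≤ a * z' - 1 := by
        have hL1 : (2 * a - 1) / (1 - a) ≤ 1 := by
          rw [div_le_one h1a]; linarith
        have hazL : a * z - 1 ≤ (2 * a - 1) / (1 - a) := by
          have h4 : a * z ≤ a * (1/(1-a)) := mul_le_mul_of_nonneg_left hzc ha1.le
          have h5 : a * (1/(1-a)) - 1 = (2 * a - 1)/(1-a) := by
            field_simp; ring
          linarith
        have hazL' : a * z' - 1 ≤ (2 * a - 1) / (1 - a) := by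
          have h4 : a * z' ≤ a * (1/(1-a)) := mul_le_mul_of_nonneg_left hzc' ha1.le
          have h5 : a * (1/(1-a)) - 1 = (2 * a - 1)/(1-a) := by
            field_simp; ring
          linarith
        by_cases hlt : orb a k < 1
        · by_cases hmem : orb a k ∈ Set.Ioo ((2 * a - 1) / (1 - a)) 1
          · -- both sides false
            have hmem1 := hmem.1
            constructor <;> intro h <;> linarith
          · have hc1 : cnd a (k+1) := cnd_succ hc hmem
            have horb : orb a (k+1) = (orb a k + 1) / a := by
              rw [orb_succ]; unfold Tmap; rw [if_pos hlt]
            have e1 : orb a k ≤ a * z - 1 ↔ orb a (k+1) ≤ z := by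
              rw [horb, div_le_iff₀ ha1]
              constructor <;> intro <;> nlinarith
            have e2 : orb a k ≤ a * z' - 1 ↔ orb a (k+1) ≤ z' := by
              rw [horb, div_le_iff₀ ha1]
              constructor <;> intro <;> nlinarith
            rw [e1, e2]
            exact hS (k+1) hc1
        · -- orb a k ≥ 1 : both sides false
          push_neg at hlt
          have hfalse : ∀ w : ℝ, 0 ≤ w → w ≤ 1/(1-a) → ¬ (orb a k ≤ a * w - 1) := by
            intro w hw0 hwc hle
            have hawL : a * w - 1 ≤ (2 * a - 1) / (1 - a) := by
              have h4 : a * w ≤ a * (1/(1-a)) := mul_le_mul_of_nonneg_left hwc ha1.le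
              have h5 : a * (1/(1-a)) - 1 = (2 * a - 1)/(1-a) := by
                field_simp; ring
              linarith
            have horb1 : orb a k = 1 := le_antisymm (by linarith) hlt
            have hL1' : (1:ℝ) ≤ (2 * a - 1) / (1 - a) := by linarith
            have ha23 : a = 2/3 := by
              rcases lt_or_eq_of_le ha2 with h | h
              · exfalso
                have : (2 * a - 1) / (1 - a) < 1 := by
                  rw [div_lt_one h1a]; linarith
                linarith
              · exact h
            rw [ha23] at horb1
            exact orb_ne_one' k horb1
          constructor <;> intro h
          · exact absurd h (hfalse z hz hzc)
          · exact absurd h (hfalse z' hz' hzc')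
      rw [if_congr (and_congr_right fun _ => hiff) rfl rfl]
    · rw [if_neg (fun h => hc h.1), if_neg (fun h => hc h.1)]

end key

/-- the one-step lumped transition map -/
def Phi (a : ℝ) (u : ℕ → ℝ) (e y : ℝ) : ℝ :=
  if y ≤ 0 then 0
  else if a * Gfun a u y + e < 0 then 0 else fsum a u (a * Gfun a u y + e)

section phi
variable {a : ℝ} {u : ℕ → ℝ} (hupos : ∀ k, cnd a k → 0 < u k)
  (husum : Summable (ubnd a u)) (ha1 : 0 < a) (ha2 : a ≤ 2/3)

include hupos husum ha1 ha2 in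
lemma measurable_Phi (e : ℝ) :
    Measurable (Phi a u e) := by
  have ha : a < 1 := by linarith
  have hG : Measurable (Gfun a u) := (Gfun_mono ha).measurable
  have hfs : Measurable (fsum a u) :=
    Monotone.measurable (fun z z' hzz => fsum_mono hupos husum hzz)
  have hinner : Measurable (fun y => a * Gfun a u y + e) := (hG.const_mul a).add_const e
  refine Measurable.ite (measurableSet_le measurable_id measurable_const) measurable_const ?_
  refine Measurable.ite ?_ measurable_const (hfs.comp hinner)
  exact measurableSet_lt hinner measurable_const

include hupos husum ha1 ha2 in
lemma Phi_eq {z : ℝ} (hz : 0 ≤ z) (hzc : z ≤ 1/(1-a)) {e : ℝ} (he : e = 1 ∨ e = -1) :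
    Phi a u e (fsum a u z) = if a * z + e < 0 then 0 else fsum a u (a * z + e) := by
  have ha : a < 1 := by linarith
  have hypos : 0 < fsum a u z := fsum_pos hupos husum hz
  set G := Gfun a u (fsum a u z) with hGdef
  have hG0 : 0 ≤ G := Gfun_nonneg ha _
  have hGz : G ≤ z := Gfun_le hupos husum ha hz
  have hGf : fsum a u G = fsum a u z := fsum_Gfun hupos husum ha1 ha hz hzc
  have hS : ∀ k, cnd a k → (orb a k ≤ G ↔ orb a k ≤ z) :=
    fun k hc => sets_eq_of_fsum_eq hupos husum hGz hGf hc
  unfold Phi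
  rw [if_neg (not_le.mpr hypos), ← hGdef]
  rcases he with he | he
  · subst he
    rw [if_neg (by nlinarith), if_neg (by nlinarith)]
    exact key_plus ha1 hG0 hz hS
  · subst he
    have h1 : a * G + (-1) = a * G - 1 := by ring
    have h2 : a * z + (-1) = a * z - 1 := by ring
    rw [h1, h2]
    exact key_minus ha1 ha2 hG0 (hGz.trans hzc) hz hzc hS


end phi

end MyAux

theorem lumped_chain_is_markov
    {Ω : Type*} [mΩ : MeasurableSpace Ω] (μ : Measure Ω) [IsProbabilityMeasure μ]
    (a p : ℝ) (ha : a ∈ Set.Ioc (0 : ℝ) (2/3)) (hp : p ∈ Set.Ioo (0 : ℝ) 1)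
    (ξ : ℕ → Ω → ℝ) (hmeas : ∀ n, Measurable (ξ n))
    (hindep : iIndepFun ξ μ)
    (hdist1 : ∀ n, μ {ω | ξ n ω = 1} = ENNReal.ofReal p)
    (hdist2 : ∀ n, μ {ω | ξ n ω = -1} = ENNReal.ofReal (1 - p))
    (X : ℝ → ℕ → Ω → ℝ)
    (hX0 : ∀ x ω, X x 0 ω = x)
    (hXrec : ∀ x n ω, X x (n + 1) ω = a * X x n ω + ξ (n + 1) ω)
    (f : ℝ → ℝ) (hf : UplusMem a f)
    (x : ℝ) (hx : x ∈ Set.Icc (0 : ℝ) (1 / (1 - a)))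
    (Y : ℕ → Ω → ℝ)
    (hY : ∀ n ω, Y n ω = if ∀ k ≤ n, 0 ≤ X x k ω then f (X x n ω) else 0) :
    (∀ᵐ ω ∂μ,
      (⨅ (n : ℕ) (_ : X x n ω < 0), (n : ℕ∞))
        = ⨅ (n : ℕ) (_ : 1 ≤ n ∧ Y n ω = 0), (n : ℕ∞)) ∧
    ∀ g : ℝ → ℝ, Measurable g → (∃ C : ℝ, ∀ t, |g t| ≤ C) →
      ∃ h : ℝ → ℝ, Measurable h ∧ ∀ n : ℕ,
        μ[(fun ω => g (Y (n + 1) ω)) |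
            ⨆ i ∈ Finset.Icc 1 n, MeasurableSpace.comap (ξ i) inferInstance]
          =ᵐ[μ] fun ω => h (Y n ω) := by
  classical
  obtain ⟨ha1, ha2⟩ := ha
  have haLT : a < 1 := by linarith
  have h1a : (0:ℝ) < 1 - a := by linarith
  obtain ⟨hp0, hp1⟩ := hp
  obtain ⟨hx0, hx1⟩ := hx
  obtain ⟨u, hupos, husum, hfeq⟩ := hf
  -- translate to MyAux vocabulary
  have hupos' : ∀ k, MyAux.cnd a k → 0 < u k := hupos
  have husum' : Summable (MyAux.ubnd a u) := by
    have he : MyAux.ubnd a u = fun k : ℕ => if (k : ℕ∞) ≤ kappa a 0 then u k else 0 := by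
      funext k
      unfold MyAux.ubnd MyAux.cnd
      congr!
    rw [he]
    exact husum
  have hfeq' : ∀ z, f z = MyAux.fsum a u z := by
    intro z
    rw [hfeq z]
    unfold MyAux.fsum MyAux.fterm MyAux.cnd MyAux.orb
    exact tsum_congr fun k => by congr!
  have hfpos : ∀ z : ℝ, 0 ≤ z → 0 < f z := fun z hz => by
    rw [hfeq']; exact MyAux.fsum_pos hupos' husum' hz
  have hfzero : ∀ z : ℝ, z < 0 → f z = 0 := fun z hz => by
    rw [hfeq']; exact MyAux.fsum_neg hupos' ha1 hz
  -- characterization of Y = 0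
  have hYzero : ∀ n ω, Y n ω = 0 ↔ ∃ k, k ≤ n ∧ X x k ω < 0 := by
    intro n ω
    rw [hY]
    by_cases hs : ∀ k ≤ n, 0 ≤ X x k ω
    · rw [if_pos hs]
      constructor
      · intro h0
        exact absurd h0 (hfpos _ (hs n le_rfl)).ne'
      · rintro ⟨k, hk, hneg⟩
        exact absurd (hs k hk) (not_le.mpr hneg)
    · rw [if_neg hs]
      push_neg at hs
      obtain ⟨k, hk, hneg⟩ := hs
      exact ⟨fun _ => ⟨k, hk, hneg⟩, fun _ => rfl⟩
  constructor
  · -- part 1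
    refine ae_of_all μ fun ω => ?_
    apply le_antisymm
    · refine le_iInf fun n => le_iInf fun hn => ?_
      obtain ⟨k, hkn, hkneg⟩ := (hYzero n ω).mp hn.2
      refine le_trans (iInf_le_of_le k (iInf_le_of_le hkneg le_rfl)) ?_
      exact_mod_cast Nat.cast_le.mpr hkn
    · refine le_iInf fun n => le_iInf fun hn => ?_
      have hn1 : 1 ≤ n := by
        rcases Nat.eq_zero_or_pos n with h0 | h0
        · subst h0
          rw [hX0] at hn
          linarith
        · exact h0
      exact iInf_le_of_le n (iInf_le_of_le ⟨hn1, (hYzero n ω).mpr ⟨n, le_rfl, hn⟩⟩ le_rfl)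
  · -- part 2 : Markov property
    intro g hgmeas hgbdd
    obtain ⟨C, hgC⟩ := hgbdd
    set F : ℕ → MeasurableSpace Ω :=
      fun n => ⨆ i ∈ Finset.Icc 1 n, MeasurableSpace.comap (ξ i) inferInstance with hFdef
    have hFle : ∀ n, F n ≤ mΩ := fun n => iSup₂_le fun i _ => (hmeas i).comap_le
    have hFmono : ∀ {m n : ℕ}, m ≤ n → F m ≤ F n := by
      intro m n hmn
      refine iSup₂_le fun i hi => ?_
      have hi' : i ∈ Finset.Icc 1 n := by
        rw [Finset.mem_Icc] at hi ⊢
        exact ⟨hi.1, hi.2.trans hmn⟩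
      exact le_iSup₂ (f := fun i (_ : i ∈ Finset.Icc 1 n) =>
        MeasurableSpace.comap (ξ i) inferInstance) i hi'
    have hXmeasF : ∀ n, Measurable[F n] (X x n) := by
      intro n
      induction n with
      | zero =>
        have hX0' : X x 0 = fun _ => x := funext fun ω => hX0 x ω
        rw [hX0']
        exact measurable_const
      | succ n ih =>
        have hXs : X x (n+1) = fun ω => a * X x n ω + ξ (n+1) ω :=
          funext fun ω => hXrec x n ω
        rw [hXs]
        have hξm : Measurable[F (n+1)] (ξ (n+1)) := by
          refine Measurable.of_comap_le ?_
          exact le_iSup₂ (f := fun i (_ : i ∈ Finset.Icc 1 (n+1)) =>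
            MeasurableSpace.comap (ξ i) inferInstance) (n+1)
            (Finset.mem_Icc.mpr ⟨by omega, le_rfl⟩)
        exact ((ih.mono (hFmono (Nat.le_succ n)) le_rfl).const_mul a).add hξm
    have hfmeas : Measurable f := by
      have : f = MyAux.fsum a u := funext hfeq'
      rw [this]
      exact Monotone.measurable (fun z z' hzz => MyAux.fsum_mono hupos' husum' hzz)
    have hYmeasF : ∀ n, Measurable[F n] (Y n) := by
      intro n
      have hYeq : Y n = fun ω =>
          if ω ∈ ⋂ k ∈ Set.Iic n, (X x k) ⁻¹' (Set.Ici 0) then f (X x n ω) else 0 := by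
        funext ω
        rw [hY]
        have hmem : (ω ∈ ⋂ k ∈ Set.Iic n, (X x k) ⁻¹' (Set.Ici 0)) ↔ ∀ k ≤ n, 0 ≤ X x k ω := by
          simp [Set.mem_Iic]
        rcases Classical.em (∀ k ≤ n, 0 ≤ X x k ω) with h | h
        · rw [if_pos h, if_pos (hmem.mpr h)]
        · rw [if_neg h, if_neg (fun hc => h (hmem.mp hc))]
      rw [hYeq]
      have hSmeas : MeasurableSet[F n] (⋂ k ∈ Set.Iic n, (X x k) ⁻¹' (Set.Ici 0)) := by
        refine MeasurableSet.biInter ((Set.finite_Iic n).countable) fun k hk => ?_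
        exact ((hXmeasF k).mono (hFmono hk) le_rfl) measurableSet_Ici
      exact Measurable.ite hSmeas (hfmeas.comp (hXmeasF n)) measurable_const
    -- independence
    have hiInd : iIndep (fun i => MeasurableSpace.comap (ξ i) inferInstance) μ :=
      hindep.iIndep
    have hIndep : ∀ n, Indep (MeasurableSpace.comap (ξ (n+1)) inferInstance) (F n) μ := by
      intro n
      have h := indep_biSup_compl (fun i => (hmeas i).comap_le) hiInd {n+1}
      have e1 : (⨆ i ∈ ({n+1} : Set ℕ), MeasurableSpace.comap (ξ i) inferInstance)
          = MeasurableSpace.comap (ξ (n+1)) inferInstance := by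
        simp
      rw [e1] at h
      refine indep_of_indep_of_le_right h ?_
      refine iSup₂_le fun i hi => ?_
      have hi' : i ∈ ({n+1}ᶜ : Set ℕ) := by
        rw [Finset.mem_Icc] at hi
        simp only [Set.mem_compl_iff, Set.mem_singleton_iff]
        omega
      exact le_iSup₂ (f := fun i (_ : i ∈ ({n+1}ᶜ : Set ℕ)) =>
        MeasurableSpace.comap (ξ i) inferInstance) i hi'
    -- the a.e. event that all ξ are ±1
    have hE : ∀ᵐ ω ∂μ, ∀ k, ξ k ω = 1 ∨ ξ k ω = -1 := by
      rw [ae_all_iff]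
      intro k
      have hmeas1 : MeasurableSet {ω | ξ k ω = 1} := hmeas k (measurableSet_singleton 1)
      have hmeas2 : MeasurableSet {ω | ξ k ω = -1} := hmeas k (measurableSet_singleton (-1))
      have hdisj : Disjoint {ω | ξ k ω = 1} {ω | ξ k ω = -1} := by
        rw [Set.disjoint_left]
        intro ω h1 h2
        simp only [Set.mem_setOf_eq] at h1 h2
        rw [h1] at h2
        norm_num at h2
      have hunion : μ ({ω | ξ k ω = 1} ∪ {ω | ξ k ω = -1}) = 1 := by
        rw [measure_union hdisj hmeas2, hdist1, hdist2,
          ← ENNReal.ofReal_add hp0.le (by linarith)]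
        norm_num
      have hcompl : μ ({ω | ξ k ω = 1} ∪ {ω | ξ k ω = -1})ᶜ = 0 := by
        rw [measure_compl (hmeas1.union hmeas2) (measure_ne_top μ _), hunion,
          measure_univ, tsub_self]
      refine measure_mono_null ?_ hcompl
      intro ω hω
      simp only [Set.mem_compl_iff, Set.mem_union, Set.mem_setOf_eq] at hω ⊢
      tauto
    -- boundedness of X on survival
    have hXbound : ∀ ω, (∀ k, ξ k ω = 1 ∨ ξ k ω = -1) → ∀ n,
        (∀ k ≤ n, 0 ≤ X x k ω) → X x n ω ≤ 1/(1-a) := by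
      intro ω hξω n
      induction n with
      | zero =>
        intro _
        rw [hX0]
        exact hx1
      | succ n ih =>
        intro hs
        have hXn : X x n ω ≤ 1/(1-a) := ih fun k hk => hs k (hk.trans (Nat.le_succ n))
        have hξ1 : ξ (n+1) ω ≤ 1 := by
          rcases hξω (n+1) with h | h <;> rw [h] <;> norm_num
        rw [hXrec]
        have h4 : a * X x n ω ≤ a * (1/(1-a)) := mul_le_mul_of_nonneg_left hXn ha1.le
        have h5 : a * (1/(1-a)) + 1 = 1/(1-a) := by
          field_simp
          ring
        linarith
    -- the key one-step recursion
    have hYrec : ∀ ω, (∀ k, ξ k ω = 1 ∨ ξ k ω = -1) → ∀ n,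
        Y (n+1) ω = MyAux.Phi a u (ξ (n+1) ω) (Y n ω) := by
      intro ω hξω n
      by_cases hs : ∀ k ≤ n, 0 ≤ X x k ω
      · have hz0 : 0 ≤ X x n ω := hs n le_rfl
        have hzc : X x n ω ≤ 1/(1-a) := hXbound ω hξω n hs
        have hYn : Y n ω = MyAux.fsum a u (X x n ω) := by
          rw [hY, if_pos hs, hfeq']
        have hphi := MyAux.Phi_eq hupos' husum' ha1 ha2 hz0 hzc (hξω (n+1))
        rw [hYn, hphi]
        have hX1 : X x (n+1) ω = a * X x n ω + ξ (n+1) ω := hXrec x n ω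
        rw [hY]
        by_cases hpos : 0 ≤ X x (n+1) ω
        · have hsall : ∀ k ≤ n+1, 0 ≤ X x k ω := by
            intro k hk
            rcases Nat.eq_or_lt_of_le hk with h | h
            · subst h; exact hpos
            · exact hs k (Nat.lt_succ_iff.mp h)
          rw [if_pos hsall, hfeq', if_neg (by rw [← hX1]; exact not_lt.mpr hpos), hX1]
        · have hnall : ¬ ∀ k ≤ n+1, 0 ≤ X x k ω := fun hall => hpos (hall (n+1) le_rfl)
          rw [if_neg hnall, if_pos (by rw [← hX1]; exact not_le.mp hpos)]
      · have hYn0 : Y n ω = 0 := by rw [hY, if_neg hs]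
        have hnall : ¬ ∀ k ≤ n+1, 0 ≤ X x k ω :=
          fun hall => hs fun k hk => hall k (hk.trans (Nat.le_succ n))
        rw [hY, if_neg hnall, hYn0]
        unfold MyAux.Phi
        rw [if_pos le_rfl]
    -- the function h
    refine ⟨fun y => g (MyAux.Phi a u 1 y) * p + g (MyAux.Phi a u (-1) y) * (1-p), ?_, ?_⟩
    · have hm1 : Measurable (MyAux.Phi a u 1) :=
        MyAux.measurable_Phi hupos' husum' ha1 ha2 1
      have hm2 : Measurable (MyAux.Phi a u (-1)) :=
        MyAux.measurable_Phi hupos' husum' ha1 ha2 (-1)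
      exact ((hgmeas.comp hm1).mul_const p).add ((hgmeas.comp hm2).mul_const (1-p))
    intro n
    show μ[(fun ω => g (Y (n + 1) ω)) | F n] =ᵐ[μ]
      fun ω => g (MyAux.Phi a u 1 (Y n ω)) * p + g (MyAux.Phi a u (-1) (Y n ω)) * (1-p)
    haveI hSF : SigmaFinite (μ.trim (hFle n)) := by infer_instance
    set G1 : Ω → ℝ := fun ω => g (MyAux.Phi a u 1 (Y n ω)) with hG1def
    set G2 : Ω → ℝ := fun ω => g (MyAux.Phi a u (-1) (Y n ω)) with hG2def
    set I1 : Ω → ℝ := fun ω => if ξ (n+1) ω = 1 then (1:ℝ) else 0 with hI1def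
    set I2 : Ω → ℝ := fun ω => if ξ (n+1) ω = -1 then (1:ℝ) else 0 with hI2def
    have hG1m : Measurable[F n] G1 :=
      (hgmeas.comp (MyAux.measurable_Phi hupos' husum' ha1 ha2 1)).comp (hYmeasF n)
    have hG2m : Measurable[F n] G2 :=
      (hgmeas.comp (MyAux.measurable_Phi hupos' husum' ha1 ha2 (-1))).comp (hYmeasF n)
    have hG1m0 : Measurable G1 := hG1m.mono (hFle n) le_rfl
    have hG2m0 : Measurable G2 := hG2m.mono (hFle n) le_rfl
    have hI1m : Measurable I1 :=
      Measurable.ite (hmeas (n+1) (measurableSet_singleton 1)) measurable_const measurable_const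
    have hI2m : Measurable I2 :=
      Measurable.ite (hmeas (n+1) (measurableSet_singleton (-1))) measurable_const measurable_const
    have hbdd : ∀ (φ : Ω → ℝ) (c : ℝ), Measurable φ → (∀ ω, |φ ω| ≤ c) → Integrable φ μ := by
      intro φ c hφ hb
      refine (integrable_const c).mono' hφ.aestronglyMeasurable (ae_of_all _ fun ω => ?_)
      rw [Real.norm_eq_abs]
      exact hb ω
    have hI1b : ∀ ω, |I1 ω| ≤ 1 := by
      intro ω; rw [hI1def]; dsimp only; split_ifs <;> norm_num
    have hI2b : ∀ ω, |I2 ω| ≤ 1 := by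
      intro ω; rw [hI2def]; dsimp only; split_ifs <;> norm_num
    have hC0 : 0 ≤ C := (abs_nonneg _).trans (hgC 0)
    have hG1I1int : Integrable (G1 * I1) μ := by
      refine hbdd _ C (hG1m0.mul hI1m) fun ω => ?_
      have := hgC (MyAux.Phi a u 1 (Y n ω))
      calc |(G1 * I1) ω| = |G1 ω| * |I1 ω| := abs_mul _ _
      _ ≤ C * 1 := mul_le_mul this (hI1b ω) (abs_nonneg _) hC0
      _ = C := mul_one C
    have hG2I2int : Integrable (G2 * I2) μ := by
      refine hbdd _ C (hG2m0.mul hI2m) fun ω => ?_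
      have := hgC (MyAux.Phi a u (-1) (Y n ω))
      calc |(G2 * I2) ω| = |G2 ω| * |I2 ω| := abs_mul _ _
      _ ≤ C * 1 := mul_le_mul this (hI2b ω) (abs_nonneg _) hC0
      _ = C := mul_one C
    have hI1int : Integrable I1 μ := hbdd _ 1 hI1m hI1b
    have hI2int : Integrable I2 μ := hbdd _ 1 hI2m hI2b
    -- decomposition of g (Y (n+1))
    have hdecomp : (fun ω => g (Y (n + 1) ω)) =ᵐ[μ] G1 * I1 + G2 * I2 := by
      filter_upwards [hE] with ω hξω
      rcases hξω (n+1) with h1 | h1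
      · have : I1 ω = 1 := by rw [hI1def]; simp [h1]
        have h2 : I2 ω = 0 := by
          rw [hI2def]; dsimp only; rw [if_neg (by rw [h1]; norm_num)]
        simp only [Pi.add_apply, Pi.mul_apply, this, h2, mul_one, mul_zero, add_zero]
        rw [hYrec ω hξω n, h1, hG1def]
      · have : I2 ω = 1 := by rw [hI2def]; simp [h1]
        have h2 : I1 ω = 0 := by
          rw [hI1def]; dsimp only; rw [if_neg (by rw [h1]; norm_num)]
        simp only [Pi.add_apply, Pi.mul_apply, this, h2, mul_one, mul_zero, zero_add]
        rw [hYrec ω hξω n, h1, hG2def]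
    -- conditional expectations of the indicators
    have hcondI : ∀ (I : Ω → ℝ) (c : ℝ) (r : ℝ), (I = fun ω => if ξ (n+1) ω = r then (1:ℝ) else 0) →
        μ {ω | ξ (n+1) ω = r} = ENNReal.ofReal c → 0 ≤ c → Integrable I μ →
        μ[I | F n] =ᵐ[μ] fun _ => c := by
      intro I c r hIdef hdist hc hint
      have hsm : StronglyMeasurable[MeasurableSpace.comap (ξ (n+1)) inferInstance] I := by
        rw [hIdef]
        have hφ : Measurable (fun t : ℝ => if t = r then (1:ℝ) else 0) :=
          Measurable.ite (measurableSet_singleton r) measurable_const measurable_const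
        have : Measurable[MeasurableSpace.comap (ξ (n+1)) inferInstance] (ξ (n+1)) :=
          Measurable.of_comap_le le_rfl
        exact (hφ.comp this).stronglyMeasurable
      have h := condExp_indep_eq (hmeas (n+1)).comap_le (hFle n) hsm (hIndep n)
      refine h.trans ?_
      have hms : MeasurableSet {ω | ξ (n+1) ω = r} := by
        have := hmeas (n+1) (measurableSet_singleton r)
        simpa [Set.preimage] using this
      have hInd : I = Set.indicator {ω | ξ (n+1) ω = r} (fun _ => (1:ℝ)) := by
        rw [hIdef]
        funext ω
        rw [Set.indicator_apply]
        rfl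
      have : μ[I] = c := by
        rw [hInd, integral_indicator_const (1:ℝ) hms,
          measureReal_def, hdist, smul_eq_mul, mul_one, ENNReal.toReal_ofReal hc]
      rw [this]
    have hcond1 : μ[I1 | F n] =ᵐ[μ] fun _ => p :=
      hcondI I1 p 1 hI1def (hdist1 (n+1)) hp0.le hI1int
    have hcond2 : μ[I2 | F n] =ᵐ[μ] fun _ => (1-p) :=
      hcondI I2 (1-p) (-1) hI2def (hdist2 (n+1)) (by linarith) hI2int
    -- assemble
    calc μ[(fun ω => g (Y (n + 1) ω)) | F n]
        =ᵐ[μ] μ[G1 * I1 + G2 * I2 | F n] := condExp_congr_ae hdecomp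
      _ =ᵐ[μ] μ[G1 * I1 | F n] + μ[G2 * I2 | F n] := condExp_add hG1I1int hG2I2int _
      _ =ᵐ[μ] G1 * μ[I1 | F n] + G2 * μ[I2 | F n] := by
          exact EventuallyEq.add
            (condExp_mul_of_stronglyMeasurable_left hG1m.stronglyMeasurable hG1I1int hI1int)
            (condExp_mul_of_stronglyMeasurable_left hG2m.stronglyMeasurable hG2I2int hI2int)
      _ =ᵐ[μ] fun ω => g (MyAux.Phi a u 1 (Y n ω)) * p
            + g (MyAux.Phi a u (-1) (Y n ω)) * (1-p) := by
          filter_upwards [hcond1, hcond2] with ω h1 h2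
          simp only [Pi.add_apply, Pi.mul_apply, h1, h2, hG1def, hG2def]



end
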